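/- Assume L < 0. Then for every j ≥ 0 the coefficient of x^r in P^{(j)} vanishes for all r < −((2j+1)p−1)d, and the coefficient of x^{−((2j+1)p−1)d} in P^{(j)} equals (−1)^j·C(−L+j−1, j)·ω^{L−j}, which is nonzero; hence for every j ≥ 0 the minimal x-degree of P^{(j)} is exactly −((2j+1)p−1)d with leading coefficient (−1)^j·C(−L+j−1, j)·ω^{L−j}. -/

import Mathlib

/-- The unit `a + h` of the power series ring `K[[h]]`, for `a ≠ 0`. -/
noncomputable def substUnit (K : Type*) [Field K] (a : K) (ha : a ≠ 0) : (PowerSeries K)ˣ :=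
  Units.mkOfMulEqOne (PowerSeries.C a + PowerSeries.X)
    (PowerSeries.C a + PowerSeries.X)⁻¹
    (PowerSeries.mul_inv_cancel _ (by simp [ha]))

/-- Substitution of the unit `U` (e.g. `1 + h` or `ω + h`) for `q` in a Laurent
polynomial `f ∈ ℤ[q,q⁻¹]`, represented by its finitely supported coefficient function
`f : ℤ →₀ ℤ`; the result `f(U) = ∑_a f_a · U^a` lies in `K[[h]]`. -/
noncomputable def lsubst {K : Type*} [Field K] (U : (PowerSeries K)ˣ) (f : ℤ →₀ ℤ) :
    PowerSeries K :=
  ∑ a ∈ f.support, ((f a : ℤ) : PowerSeries K) * ((U ^ a : (PowerSeries K)ˣ) : PowerSeries K)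

/-- The formal Laurent series `∑_{n ≥ d} c_n xⁿ ∈ K((x))`. -/
noncomputable def seriesOf {K : Type*} [Field K] (d : ℤ) (c : ℤ → K) : LaurentSeries K :=
  HahnSeries.single d 1 * HahnSeries.ofPowerSeries ℤ K (PowerSeries.mk fun i => c (d + i))

/-- A Laurent polynomial over `K`, represented by its finitely supported coefficient
function `g : ℤ →₀ K`, viewed inside the field of formal Laurent series `K((x))`. -/
noncomputable def finsuppToLS {K : Type*} [Zero K] (g : ℤ →₀ K) : LaurentSeries K :=
  { coeff := ⇑g, isPWO_support' := g.finite_support.isPWO }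

/-- A Laurent polynomial with integer coefficients, viewed inside `ℚ((x))`. -/
noncomputable def intLaurentToLS (g : ℤ →₀ ℤ) : LaurentSeries ℚ :=
  finsuppToLS (g.mapRange (fun a : ℤ => (a : ℚ)) (by simp))

/-- `F` (given by its Laurent-polynomial coefficients `f n ∈ ℤ[q,q⁻¹]`, supported in
degrees `n ≥ d`) admits an MMR expansion with data `(Δ, P)`: for every `j ≥ 0`, the
Laurent series `∑_{n ≥ d} ([h^j] f_n(1+h)) xⁿ` equals `P^{(j)}(x)/Δ(x)^{2j+1}` in
`ℚ((x))`, where `P⁰ = 1`. -/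
def HasMMRExpansion (d : ℤ) (f : ℤ → (ℤ →₀ ℤ)) (Δ : ℤ →₀ ℤ) (P : ℕ → (ℤ →₀ ℚ)) : Prop :=
  Δ ≠ 0 ∧ P 0 = Finsupp.single 0 1 ∧
  ∀ j : ℕ,
    seriesOf d (fun r =>
        PowerSeries.coeff j (lsubst (substUnit ℚ 1 one_ne_zero) (f r))) =
      finsuppToLS (P j) / (intLaurentToLS Δ) ^ (2 * j + 1)

/-- A Laurent polynomial with integer coefficients, with `x` replaced by `x^p`,
viewed inside `ℂ((x))`. -/
noncomputable def intLaurentXpToC (p : ℕ) (g : ℤ →₀ ℤ) : LaurentSeries ℂ :=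
  finsuppToLS ((g.mapDomain fun a => (p : ℤ) * a).mapRange (fun a : ℤ => (a : ℂ)) (by simp))

/-! ### Auxiliary lemmas -/

/-- The candidate power series for `(ω+h)^{-(m+1)}`. -/
noncomputable def Hser (ω : ℂ) (m : ℕ) : PowerSeries ℂ :=
  PowerSeries.mk fun j => (-1)^j * ((m + j).choose j : ℂ) * ω ^ (-1 - (m:ℤ) - (j:ℤ))

open PowerSeries in
lemma Hser_base (ω : ℂ) (hω0 : ω ≠ 0) : (C ω + X) * Hser ω 0 = 1 := by
  ext k
  cases k with
  | zero => simp [Hser, zpow_neg, mul_inv_cancel₀ hω0]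
  | succ j =>
    simp [Hser, add_mul, coeff_succ_X_mul, pow_succ]
    rw [show (-1 - ((j:ℤ)+1)) = (-1 - (j:ℤ)) - 1 by ring, zpow_sub_one₀ hω0]
    field_simp
    simp

open PowerSeries in
lemma Hser_step (ω : ℂ) (hω0 : ω ≠ 0) (m : ℕ) :
    (C ω + X) * Hser ω (m+1) = Hser ω m := by
  ext k
  cases k with
  | zero =>
    simp [Hser]
    rw [show (-1 - ((m:ℤ)+1)) = (-1 - (m:ℤ)) - 1 by ring, zpow_sub_one₀ hω0]
    field_simp
  | succ j =>
    simp [Hser, add_mul, coeff_succ_X_mul, pow_succ]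
    have pascal : ((m + 1 + (j+1)).choose (j+1) : ℂ) =
        ((m + j + 1).choose j : ℂ) + ((m + j + 1).choose (j+1) : ℂ) := by
      rw [show m + 1 + (j+1) = (m + j + 1) + 1 by ring]
      rw [Nat.choose_succ_succ]
      push_cast; ring
    rw [show (-1 - ((m:ℤ)+1) - ((j:ℤ)+1)) = (-1 - (m:ℤ) - ((j:ℤ)+1)) - 1 by ring,
       zpow_sub_one₀ hω0]
    rw [show m + 1 + j = m + j + 1 by ring]
    field_simp
    rw [pascal]
    ring

open PowerSeries in
lemma Hser_pow (ω : ℂ) (hω0 : ω ≠ 0) (m : ℕ) :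
    (C ω + X)^(m+1) * Hser ω m = 1 := by
  induction m with
  | zero => simpa using Hser_base ω hω0
  | succ m ih =>
    calc (C ω + X)^(m+2) * Hser ω (m+1)
        = (C ω + X)^(m+1) * ((C ω + X) * Hser ω (m+1)) := by ring
      _ = 1 := by rw [Hser_step ω hω0, ih]

lemma substUnit_zpow_neg (ω : ℂ) (hω0 : ω ≠ 0) (m : ℕ) :
    ((substUnit ℂ ω hω0 ^ (-((m:ℤ)+1)) : (PowerSeries ℂ)ˣ) : PowerSeries ℂ) = Hser ω m := by
  set U := substUnit ℂ ω hω0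
  have hval : (U : PowerSeries ℂ) = PowerSeries.C ω + PowerSeries.X := rfl
  have h1 : ((U^(m+1) : (PowerSeries ℂ)ˣ) : PowerSeries ℂ) * Hser ω m = 1 := by
    rw [Units.val_pow_eq_pow_val, hval]; exact Hser_pow ω hω0 m
  have h2 : U ^ (-((m:ℤ)+1)) = (U^(m+1))⁻¹ := by
    rw [← zpow_natCast U (m+1), ← zpow_neg]; norm_num
  rw [h2]
  calc ((U^(m+1))⁻¹ : (PowerSeries ℂ)ˣ).val
      = ((U^(m+1))⁻¹ : (PowerSeries ℂ)ˣ).val *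
          (((U^(m+1) : (PowerSeries ℂ)ˣ) : PowerSeries ℂ) * Hser ω m) := by rw [h1, mul_one]
    _ = (((U^(m+1))⁻¹ : (PowerSeries ℂ)ˣ).val *
          ((U^(m+1) : (PowerSeries ℂ)ˣ) : PowerSeries ℂ)) * Hser ω m := by ring
    _ = Hser ω m := by rw [Units.inv_mul, one_mul]

lemma hahn_mul_low {K : Type*} [Field K] {x y : LaurentSeries K} {a b : ℤ}
    (hx : ∀ r, r < a → x.coeff r = 0) (hy : ∀ r, r < b → y.coeff r = 0) :
    (∀ r, r < a + b → (x * y).coeff r = 0) ∧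
      (x * y).coeff (a + b) = x.coeff a * y.coeff b := by
  constructor
  · intro r hr
    rw [HahnSeries.coeff_mul]
    apply Finset.sum_eq_zero
    intro ij hij
    obtain ⟨h1, h2, h3⟩ := Finset.mem_addAntidiagonal.mp hij
    rcases lt_or_ge ij.1 a with h | h
    · rw [hx _ h, zero_mul]
    · rw [hy ij.2 (by omega), mul_zero]
  · rw [HahnSeries.coeff_mul, Finset.sum_eq_single (a, b)]
    · intro ij hij hne
      obtain ⟨h1, h2, h3⟩ := Finset.mem_addAntidiagonal.mp hij
      rcases lt_or_ge ij.1 a with h | h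
      · rw [hx _ h, zero_mul]
      · rcases lt_or_ge ij.2 b with h' | h'
        · rw [hy _ h', mul_zero]
        · exact absurd (Prod.ext (by omega) (by omega)) hne
    · intro hnm
      rw [Finset.mem_addAntidiagonal] at hnm
      simp only [HahnSeries.mem_support, not_and, not_not] at hnm
      by_cases hxa : x.coeff a = 0
      · rw [hxa, zero_mul]
      · have hyb : y.coeff b = 0 := by
          by_contra hyb
          exact hnm hxa hyb trivial
        rw [hyb, mul_zero]

lemma hahn_pow_low {K : Type*} [Field K] {y : LaurentSeries K} {b : ℤ}
    (hy : ∀ r, r < b → y.coeff r = 0) (n : ℕ) :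
    (∀ r, r < (n:ℤ) * b → (y^n).coeff r = 0) ∧
      (y^n).coeff ((n:ℤ) * b) = (y.coeff b)^n := by
  induction n with
  | zero =>
    simp only [pow_zero, Nat.cast_zero, zero_mul]
    constructor
    · intro r hr
      rw [HahnSeries.coeff_one, if_neg (by omega)]
    · rw [HahnSeries.coeff_one, if_pos rfl]
  | succ n ih =>
    have key := hahn_mul_low (x := y^n) (y := y) ih.1 hy
    constructor
    · intro r hr
      rw [pow_succ]
      exact key.1 r (by push_cast at hr; linarith)
    · have hcast : ((n+1:ℕ):ℤ) * b = (n:ℤ)*b + b := by push_cast; ring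
      rw [pow_succ, hcast, key.2, ih.2, ← pow_succ]

lemma seriesOf_coeff_lt {K : Type*} [Field K] (d : ℤ) (c : ℤ → K) (r : ℤ) (h : r < d) :
    (seriesOf d c).coeff r = 0 := by
  rw [seriesOf, show r = (r - d) + d by ring, HahnSeries.coeff_single_mul_add, one_mul]
  rw [HahnSeries.ofPowerSeries_apply, HahnSeries.embDomain_notin_range]
  simp only [Set.mem_range, not_exists]
  intro n hn
  simp only [Nat.castOrderEmbedding_apply] at hn
  omega

lemma seriesOf_coeff_d {K : Type*} [Field K] (d : ℤ) (c : ℤ → K) :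
    (seriesOf d c).coeff d = c d := by
  have h := HahnSeries.coeff_single_mul_add (r := (1:K))
    (x := HahnSeries.ofPowerSeries ℤ K (PowerSeries.mk fun i => c (d + i))) (a := 0) (b := d)
  rw [zero_add] at h
  rw [seriesOf, h, one_mul, show (0:ℤ) = ((0:ℕ):ℤ) by norm_num,
    HahnSeries.ofPowerSeries_apply_coeff]
  simp

/-- Expansion at a primitive `p`-th root of unity `ω`, case `L < 0`:
if for every `j ≥ 0` one has `∑_{n≥d} ([h^j] f_n(ω+h)) xⁿ = P⁽ʲ⁾(x)/Δ(x^p)^{2j+1}` in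
`ℂ((x))`, where the lowest-degree term of `Δ` is `x^{-d}` with coefficient `1`, then
for every `j ≥ 0` the coefficient of `x^r` in `P⁽ʲ⁾` vanishes for
`r < -((2j+1)p - 1)d` and the coefficient of `x^{-((2j+1)p-1)d}` equals
`(-1)^j·C(-L+j-1, j)·ω^{L-j}`, which is nonzero; hence the minimal x-degree of `P⁽ʲ⁾`
is exactly `-((2j+1)p-1)d`. -/
theorem mmr_root_of_unity_neg_L (d L : ℤ) (hL : L < 0) (p : ℕ) (hp : 1 ≤ p)
    (ω : ℂ) (hω : IsPrimitiveRoot ω p)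
    (f : ℤ → (ℤ →₀ ℤ))
    (hfsupp : ∀ r : ℤ, r < d → f r = 0) (hfd : f d = Finsupp.single L 1)
    (Δ : ℤ →₀ ℤ) (hΔd : Δ (-d) = 1) (hΔlow : ∀ r : ℤ, r < -d → Δ r = 0)
    (P : ℕ → (ℤ →₀ ℂ))
    (hid : ∀ j : ℕ,
      seriesOf d (fun r =>
          PowerSeries.coeff j (lsubst (substUnit ℂ ω (hω.ne_zero (by omega))) (f r))) =
        finsuppToLS (P j) / (intLaurentXpToC p Δ) ^ (2 * j + 1)) :
    ∀ j : ℕ,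
      (∀ r : ℤ, r < -(((2 * (j : ℤ) + 1) * (p : ℤ) - 1) * d) → P j r = 0) ∧
      P j (-(((2 * (j : ℤ) + 1) * (p : ℤ) - 1) * d)) =
        ((-1) ^ j * ((-L + j - 1).toNat.choose j) : ℂ) * ω ^ (L - (j : ℤ)) ∧
      P j (-(((2 * (j : ℤ) + 1) * (p : ℤ) - 1) * d)) ≠ 0 := by
  have hω0 : ω ≠ 0 := hω.ne_zero (by omega)
  have hppos : (0:ℤ) < (p:ℤ) := by exact_mod_cast hp
  have hpne : (p:ℤ) ≠ 0 := hppos.ne'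
  have hpinj : Function.Injective (fun a : ℤ => (p:ℤ) * a) :=
    mul_right_injective₀ hpne
  obtain ⟨m, hm⟩ : ∃ m : ℕ, L = -((m:ℤ)+1) := ⟨(-L-1).toNat, by omega⟩
  intro j
  set c : ℤ → ℂ :=
    fun r => PowerSeries.coeff j (lsubst (substUnit ℂ ω (hω.ne_zero (by omega))) (f r))
    with hc
  -- leading value
  have hcd : c d = (-1)^j * ((m + j).choose j : ℂ) * ω ^ (L - (j:ℤ)) := by
    have hUeq : substUnit ℂ ω (hω.ne_zero (by omega)) = substUnit ℂ ω hω0 := rfl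
    rw [hc]
    simp only [hUeq, hfd, lsubst, Finsupp.support_single_ne_zero L one_ne_zero,
      Finset.sum_singleton, Finsupp.single_eq_same]
    push_cast
    rw [one_mul, hm, substUnit_zpow_neg ω hω0 m, Hser, PowerSeries.coeff_mk]
    congr 2
    omega
  have hκ : c d ≠ 0 := by
    rw [hcd]
    refine mul_ne_zero (mul_ne_zero ?_ ?_) (zpow_ne_zero _ hω0)
    · exact pow_ne_zero _ (by norm_num)
    · exact_mod_cast (Nat.choose_pos (Nat.le_add_left j m)).ne'
  -- Δ(x^p) facts
  set B := intLaurentXpToC p Δ with hB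
  have hcoe : ∀ r : ℤ, B.coeff r = (((Δ.mapDomain fun a => (p:ℤ)*a) r : ℤ) : ℂ) := by
    intro r
    simp [hB, intLaurentXpToC, finsuppToLS, Finsupp.mapRange_apply]
  have hBd : B.coeff ((p:ℤ) * (-d)) = 1 := by
    rw [hcoe, Finsupp.mapDomain_apply hpinj, hΔd]; norm_num
  have hB0 : ∀ r : ℤ, r < (p:ℤ) * (-d) → B.coeff r = 0 := by
    intro r hr
    rw [hcoe]
    by_cases hex : ∃ a : ℤ, (p:ℤ) * a = r
    · obtain ⟨a, rfl⟩ := hex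
      rw [Finsupp.mapDomain_apply hpinj]
      have ha : a < -d := lt_of_mul_lt_mul_left hr hppos.le
      rw [hΔlow a ha]; norm_num
    · rw [Finsupp.mapDomain_notin_range _ _ (by simpa using hex)]; norm_num
  set n : ℕ := 2 * j + 1 with hn
  have hBn := hahn_pow_low hB0 n
  have hBn1 : (B^n).coeff ((n:ℤ) * ((p:ℤ) * (-d))) = 1 := by
    rw [hBn.2, hBd, one_pow]
  have hBn_ne : B ^ n ≠ 0 := by
    intro h0
    rw [h0] at hBn1
    simp at hBn1
  -- the identity
  have h := (hid j).symm
  rw [div_eq_iff hBn_ne] at h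
  -- arithmetic
  have harith : d + (n:ℤ) * ((p:ℤ) * (-d)) = -(((2 * (j:ℤ) + 1) * (p:ℤ) - 1) * d) := by
    rw [hn]; push_cast; ring
  have key := hahn_mul_low (x := seriesOf d c) (y := B^n) (a := d)
    (b := (n:ℤ) * ((p:ℤ) * (-d))) (fun r hr => seriesOf_coeff_lt d c r hr) hBn.1
  have hPcoeff : ∀ r : ℤ, P j r = (seriesOf d c * B^n).coeff r := by
    intro r
    have : P j r = (finsuppToLS (P j)).coeff r := rfl
    rw [this, h]
  refine ⟨?_, ?_, ?_⟩
  · intro r hr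
    rw [hPcoeff r]
    exact key.1 r (by omega)
  · rw [hPcoeff, ← harith, key.2, hBn1, mul_one, seriesOf_coeff_d, hcd,
      show (-L + (j:ℤ) - 1).toNat = m + j from by omega]
  · rw [hPcoeff, ← harith, key.2, hBn1, mul_one, seriesOf_coeff_d]
    exact hκ
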